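/- arXiv:1503.08175 — 3 statements merged into one kernel-verified Lean document; each statement's English description precedes it below -/
import Mathlib

section
/- Let G = (V,E) be a rooted directed graph in which every vertex has at least two outgoing neighbors. Then the root set V_r of G has cardinality at least 3. -/
/-- `i` is a root if every vertex has a directed path to `i`. -/
def IsRoot {V : Type*} (Adj : V → V → Prop) (i : V) : Prop :=
  ∀ j : V, Relation.ReflTransGen Adj j i

theorem stmt_3 {V : Type*} [Fintype V] [DecidableEq V]
    (Adj : V → V → Prop) [DecidableRel Adj]
    (hsimple : ∀ v, ¬ Adj v v)
    (hrooted : ∃ r, IsRoot Adj r)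
    (hdeg : ∀ v, 2 ≤ (Finset.univ.filter (fun w => Adj v w)).card) :
    3 ≤ Set.ncard {v | IsRoot Adj v} := by
  obtain ⟨r, hr⟩ := hrooted
  obtain ⟨a, ha, b, hb, hab⟩ := Finset.one_lt_card.mp (lt_of_lt_of_le one_lt_two (hdeg r))
  simp only [Finset.mem_filter] at ha hb
  have hra : Adj r a := ha.2
  have hrb : Adj r b := hb.2
  have haroot : IsRoot Adj a := fun j => (hr j).tail hra
  have hbroot : IsRoot Adj b := fun j => (hr j).tail hrb
  have har : a ≠ r := fun h => hsimple r (h ▸ hra)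
  have hbr : b ≠ r := fun h => hsimple r (h ▸ hrb)
  have hsub : ({r, a, b} : Set V) ⊆ {v | IsRoot Adj v} := by
    intro v hv
    rcases hv with h | h | h <;> subst h <;> assumption
  have h3 : ({r, a, b} : Set V).ncard = 3 := by
    rw [Set.ncard_eq_three]
    exact ⟨r, a, b, har.symm, hbr.symm, hab, rfl⟩
  calc 3 = ({r, a, b} : Set V).ncard := h3.symm
    _ ≤ Set.ncard {v | IsRoot Adj v} :=
      Set.ncard_le_ncard hsub (Set.toFinite _)
end

section
/- Let k ≥ 3 and let v_1 ≥ v_2 ≥ ... ≥ v_k > 0 with Σ_{i=1}^k v_i = 1 and v_i ≤ 1/3 for all i. Set μ₁ := 1/(4v_1) and x_i := (1/2)(1 - √(1 - 4μ₁ v_i)) for each i. Then Σ_{i=1}^k x_i > 1. -/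
lemma sqrtb_aux (u : ℝ) (h0 : 0 ≤ u) (h1 : u ≤ 1) :
    u/4 + u^2/16 ≤ (1/2) * (1 - Real.sqrt (1 - u)) := by
  have hy : 0 ≤ 1 - u/2 - u^2/8 := by nlinarith
  have key : Real.sqrt (1-u) ≤ 1 - u/2 - u^2/8 := by
    have h := Real.sqrt_le_sqrt (show 1-u ≤ (1 - u/2 - u^2/8)^2 by nlinarith)
    rwa [Real.sqrt_sq hy] at h
  nlinarith

theorem stmt_11 (k : ℕ) (hk : 3 ≤ k) (v : Fin k → ℝ)
    (hpos : ∀ i, 0 < v i)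
    (hmono : ∀ i j : Fin k, i ≤ j → v j ≤ v i)
    (hsum : ∑ i, v i = 1)
    (hbd : ∀ i, v i ≤ 1/3) :
    1 < ∑ i, (1/2) *
      (1 - Real.sqrt (1 - 4 * (1 / (4 * v ⟨0, by omega⟩)) * v i)) := by
  have h0k : 0 < k := by omega
  have h1k : 1 < k := by omega
  set i0 : Fin k := ⟨0, h0k⟩ with hi0def
  set i1 : Fin k := ⟨1, h1k⟩ with hi1def
  have ha : 0 < v i0 := hpos i0
  have ha' : v i0 ≠ 0 := ne_of_gt ha
  have ha3 : v i0 ≤ 1/3 := hbd i0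
  have hle : ∀ i, v i ≤ v i0 := by
    intro i
    exact hmono i0 i (by rw [Fin.le_def]; exact Nat.zero_le _)
  set f : Fin k → ℝ := fun i => (1/2) *
      (1 - Real.sqrt (1 - 4 * (1 / (4 * v i0)) * v i)) with hfdef
  show 1 < ∑ i, f i
  -- rewrite inner expression
  have harg : ∀ i, 1 - 4 * (1 / (4 * v i0)) * v i = 1 - v i / v i0 := by
    intro i; field_simp
  -- lower bounds
  have hbound : ∀ i, v i / (4 * v i0) + (v i / v i0)^2 / 16 ≤ f i := by
    intro i
    have h0 : 0 ≤ v i / v i0 := div_nonneg (hpos i).le ha.le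
    have h1 : v i / v i0 ≤ 1 := (div_le_one ha).mpr (hle i)
    have := sqrtb_aux (v i / v i0) h0 h1
    rw [hfdef]
    simp only [harg i]
    calc v i / (4 * v i0) + (v i / v i0)^2 / 16
        = (v i / v i0)/4 + (v i / v i0)^2/16 := by field_simp
      _ ≤ _ := this
  have hbound' : ∀ i, v i / (4 * v i0) ≤ f i := by
    intro i
    have h := hbound i
    have : 0 ≤ (v i / v i0)^2 / 16 := by positivity
    linarith
  have hf0 : f i0 = 1/2 := by
    rw [hfdef]
    simp only [harg i0, div_self ha']
    norm_num
  -- split the sum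
  have hmem1 : i1 ∈ Finset.univ.erase i0 := by
    refine Finset.mem_erase.mpr ⟨?_, Finset.mem_univ _⟩
    simp [hi0def, hi1def, Fin.ext_iff]
  rw [← Finset.add_sum_erase Finset.univ f (Finset.mem_univ i0),
      ← Finset.add_sum_erase _ f hmem1]
  have hsum_rest : ∑ i ∈ (Finset.univ.erase i0).erase i1, v i
      = 1 - v i0 - v i1 := by
    have e1 : ∑ i, v i = v i0 + ∑ i ∈ Finset.univ.erase i0, v i :=
      (Finset.add_sum_erase Finset.univ v (Finset.mem_univ i0)).symm
    have e2 : ∑ i ∈ Finset.univ.erase i0, v i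
        = v i1 + ∑ i ∈ (Finset.univ.erase i0).erase i1, v i :=
      (Finset.add_sum_erase _ v hmem1).symm
    rw [hsum] at e1
    linarith [e1, e2]
  have hrest : (1 - v i0 - v i1) / (4 * v i0)
      ≤ ∑ i ∈ (Finset.univ.erase i0).erase i1, f i := by
    rw [hsum_rest.symm, Finset.sum_div]
    exact Finset.sum_le_sum fun i _ => hbound' i
  have hb1 : v i1 / (4 * v i0) + (v i1 / v i0)^2 / 16 ≤ f i1 := hbound i1
  have hvb : 0 < v i1 := hpos i1
  have hvb' : v i1 ≤ v i0 := hle i1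
  have key : 1 < 1/2 + ((v i1 / (4 * v i0) + (v i1 / v i0)^2 / 16)
      + (1 - v i0 - v i1) / (4 * v i0)) := by
    have e : 1/2 + ((v i1 / (4 * v i0) + (v i1 / v i0)^2 / 16)
        + (1 - v i0 - v i1) / (4 * v i0))
        = 1 + (4 * v i0 + v i1^2 - 12 * v i0^2) / (16 * v i0^2) := by
      field_simp; ring
    rw [e]
    have hpos' : 0 < (4 * v i0 + v i1^2 - 12 * v i0^2) / (16 * v i0^2) :=
      div_pos (by nlinarith) (by positivity)
    linarith
  calc (1:ℝ) < 1/2 + ((v i1 / (4 * v i0) + (v i1 / v i0)^2 / 16)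
      + (1 - v i0 - v i1) / (4 * v i0)) := key
    _ ≤ f i0 + (f i1 + ∑ i ∈ (Finset.univ.erase i0).erase i1, f i) := by
        rw [hf0]; gcongr
end

section
/- Let n ≥ 3, α := 1/2 - 1/(4(2n-3)), Q := {x in the unit simplex of ℝ^n : x_i ≤ α for all i}, and let V_r ⊆ {1,...,n} with |V_r| ≥ 3, Q_r := {x ∈ Q : x_i = 0 for all i ∉ V_r}. If x ∈ Q satisfies Σ_{i∉V_r} x_i ≤ ε for some ε ≤ 1/4, then there exists x' ∈ Q_r with Σ_{i=1}^n |x_i - x'_i| ≤ 2ε. -/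
theorem stmt_15 (n : ℕ) (hn : 3 ≤ n) (Vr : Finset (Fin n)) (hVr : 3 ≤ Vr.card)
    (x : Fin n → ℝ) (hx0 : ∀ i, 0 ≤ x i) (hx1 : ∑ i, x i = 1)
    (hxα : ∀ i, x i ≤ 1/2 - 1 / (4 * (2 * (n : ℝ) - 3)))
    (ε : ℝ) (hε : ε ≤ 1/4)
    (hsum : ∑ i ∈ Finset.univ \ Vr, x i ≤ ε) :
    ∃ x' : Fin n → ℝ, (∀ i, 0 ≤ x' i) ∧ (∑ i, x' i = 1) ∧
      (∀ i, x' i ≤ 1/2 - 1 / (4 * (2 * (n : ℝ) - 3))) ∧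
      (∀ i ∉ Vr, x' i = 0) ∧
      ∑ i, |x i - x' i| ≤ 2 * ε := by
  set α : ℝ := 1/2 - 1 / (4 * (2 * (n : ℝ) - 3)) with hαdef
  have hn3 : (3:ℝ) ≤ (n:ℝ) := by exact_mod_cast hn
  have hden : (3:ℝ) ≤ 2 * (n:ℝ) - 3 := by linarith
  have hαlb : (5:ℝ)/12 ≤ α := by
    have h1 : 1 / (4 * (2 * (n:ℝ) - 3)) ≤ 1/12 := by
      apply one_div_le_one_div_of_le <;> linarith
    simp only [hαdef]; linarith
  set s : ℝ := ∑ i ∈ Finset.univ \ Vr, x i with hsdef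
  set T : ℝ := ∑ i ∈ Vr, (α - x i) with hTdef
  clear_value α s T
  have hs0 : 0 ≤ s := hsdef ▸ Finset.sum_nonneg fun i _ => hx0 i
  have hε0 : 0 ≤ ε := le_trans hs0 hsum
  have hsplit : ∑ i ∈ Vr, x i + s = 1 := by
    rw [hsdef, add_comm, Finset.sum_sdiff (Finset.subset_univ Vr), hx1]
  have hTeq : T = Vr.card * α - (1 - s) := by
    rw [hTdef, Finset.sum_sub_distrib, Finset.sum_const, nsmul_eq_mul]
    linarith
  have hcard : (3:ℝ) ≤ (Vr.card : ℝ) := by exact_mod_cast hVr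
  have hα0 : 0 ≤ α := le_trans (by norm_num) hαlb
  have hT14 : (1:ℝ)/4 ≤ T := by
    have : (3:ℝ) * α ≤ (Vr.card : ℝ) * α := by
      apply mul_le_mul_of_nonneg_right hcard hα0
    rw [hTeq]; linarith
  have hT0 : (0:ℝ) < T := by linarith
  have hsT : s ≤ T := by linarith [le_trans hsum hε]
  have hratio1 : s / T ≤ 1 := (div_le_one hT0).2 hsT
  have hratio0 : 0 ≤ s / T := div_nonneg hs0 hT0.le
  refine ⟨fun i => if i ∈ Vr then x i + (α - x i) * (s / T) else 0, ?_, ?_, ?_, ?_, ?_⟩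
  · intro i
    by_cases hi : i ∈ Vr <;> simp [hi]
    exact add_nonneg (hx0 i) (mul_nonneg (by linarith [hxα i]) hratio0)
  · rw [← Finset.sum_subset (Finset.subset_univ Vr) (by intro i _ hi; simp [hi])]
    have : ∑ i ∈ Vr, (if i ∈ Vr then x i + (α - x i) * (s / T) else 0)
        = ∑ i ∈ Vr, x i + (∑ i ∈ Vr, (α - x i)) * (s / T) := by
      rw [Finset.sum_mul, ← Finset.sum_add_distrib]
      exact Finset.sum_congr rfl fun i hi => by simp [hi]
    rw [this, ← hTdef]
    have hTs : T * (s / T) = s := by field_simp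
    linarith
  · intro i
    by_cases hi : i ∈ Vr <;> simp [hi]
    · have h1 : (α - x i) * (s / T) ≤ (α - x i) * 1 :=
        mul_le_mul_of_nonneg_left hratio1 (by linarith [hxα i])
      have := hxα i
      linarith
    · exact hα0
  · intro i hi; simp [hi]
  · have hsd : ∑ i, |x i - (if i ∈ Vr then x i + (α - x i) * (s / T) else 0)|
        = ∑ i ∈ Finset.univ \ Vr, |x i - (if i ∈ Vr then x i + (α - x i) * (s / T) else 0)|
        + ∑ i ∈ Vr, |x i - (if i ∈ Vr then x i + (α - x i) * (s / T) else 0)| :=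
      (Finset.sum_sdiff (Finset.subset_univ Vr)).symm
    rw [hsd]
    have h1 : ∑ i ∈ Finset.univ \ Vr, |x i - (if i ∈ Vr then x i + (α - x i) * (s / T) else 0)| = s := by
      rw [hsdef]
      apply Finset.sum_congr rfl
      intro i hi
      rw [Finset.mem_sdiff] at hi
      simp [hi.2, abs_of_nonneg (hx0 i)]
    have h2 : ∑ i ∈ Vr, |x i - (if i ∈ Vr then x i + (α - x i) * (s / T) else 0)| = s := by
      have : ∀ i ∈ Vr, |x i - (if i ∈ Vr then x i + (α - x i) * (s / T) else 0)|
          = (α - x i) * (s / T) := by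
        intro i hi
        simp only [hi, if_true]
        rw [show x i - (x i + (α - x i) * (s / T)) = -((α - x i) * (s / T)) by ring, abs_neg,
          abs_of_nonneg (mul_nonneg (by linarith [hxα i]) hratio0)]
      rw [Finset.sum_congr rfl this, ← Finset.sum_mul, ← hTdef]
      field_simp
    rw [h1, h2]; linarith
end
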